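/- Let m ≥ 1, let T_1,…,T_m ∈ ℝ be scores, and for each nonempty S ⊆ [m] let t_α(S) = 1{f(|S|, (T_i)_{i∈S}) ≤ α}, where for each s the function f(s, ·) : ℝ^s → [0,1] is invariant under permutations of its arguments and nondecreasing in each argument. Then for every nonempty S ⊆ [m], the closed-testing rejection indicator satisfies t̄_α(S) = min_{0 ≤ i ≤ m−|S|} t_α(S ∪ J_i*), where J_0* = ∅ and, for 1 ≤ i ≤ m−|S|, J_i* ⊆ [m]∖S is any set of i indices whose scores are the i largest scores in [m]∖S (i.e. T_j ≥ T_k for all j ∈ J_i* and k ∈ ([m]∖S)∖J_i*). In particular, closed testing of a single set S requires evaluating at most m−|S|+1 local tests. -/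

import Mathlib

lemma fcast (f : (s : ℕ) → (Fin s → ℝ) → ℝ) {s t : ℕ} (h : s = t) (x : Fin t → ℝ) :
    f s (x ∘ Fin.cast h) = f t x := by
  subst h; rfl

lemma pmono (m : ℕ) (T : Fin m → ℝ)
    (f : (s : ℕ) → (Fin s → ℝ) → ℝ)
    (hsym : ∀ (s : ℕ) (σ : Equiv.Perm (Fin s)) (x : Fin s → ℝ), f s (x ∘ σ) = f s x)
    (hmono : ∀ (s : ℕ) (x y : Fin s → ℝ), (∀ j, x j ≤ y j) → f s x ≤ f s y)
    (p : Finset (Fin m) → ℝ)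
    (hpdef : ∀ S : Finset (Fin m),
      p S = f S.card (fun j => T ((S.orderIsoOfFin rfl j : S) : Fin m)))
    (A B : Finset (Fin m)) (e : {x // x ∈ A} ≃ {x // x ∈ B})
    (he : ∀ a : {x // x ∈ A}, T ↑a ≤ T ↑(e a)) : p A ≤ p B := by
  have hcard : A.card = B.card := by
    rw [← Fintype.card_coe, ← Fintype.card_coe]
    exact Fintype.card_congr e
  rw [hpdef A, hpdef B]
  set xA : Fin A.card → ℝ := fun j => T ((A.orderIsoOfFin rfl j : A) : Fin m)
  set xB : Fin B.card → ℝ := fun j => T ((B.orderIsoOfFin rfl j : B) : Fin m)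
  have key : f B.card xB = f A.card (xB ∘ Fin.cast hcard) := (fcast f hcard xB).symm
  rw [key]
  set σ : Equiv.Perm (Fin A.card) :=
    ((A.orderIsoOfFin rfl).toEquiv.trans (e.trans
      ((B.orderIsoOfFin rfl).toEquiv.symm.trans (finCongr hcard.symm))))
  have h1 : f A.card xA ≤ f A.card ((xB ∘ Fin.cast hcard) ∘ σ) := by
    apply hmono
    intro j
    have : ((xB ∘ Fin.cast hcard) ∘ σ) j = T ↑(e (A.orderIsoOfFin rfl j)) := by
      simp only [Function.comp_apply, σ, Equiv.trans_apply, xB]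
      congr 1
      have : Fin.cast hcard (finCongr hcard.symm ((B.orderIsoOfFin rfl).toEquiv.symm
          (e ((A.orderIsoOfFin rfl).toEquiv j)))) =
          (B.orderIsoOfFin rfl).toEquiv.symm (e ((A.orderIsoOfFin rfl).toEquiv j)) := by
        ext; simp
      rw [this]
      simp
    rw [this]
    exact he _
  calc f A.card xA ≤ f A.card ((xB ∘ Fin.cast hcard) ∘ σ) := h1
    _ = f A.card (xB ∘ Fin.cast hcard) := hsym _ σ _

theorem stmt_2 (m : ℕ) (hm : 1 ≤ m) (T : Fin m → ℝ) (α : ℝ)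
    (f : (s : ℕ) → (Fin s → ℝ) → ℝ)
    (hrange : ∀ (s : ℕ) (x : Fin s → ℝ), f s x ∈ Set.Icc (0:ℝ) 1)
    (hsym : ∀ (s : ℕ) (σ : Equiv.Perm (Fin s)) (x : Fin s → ℝ), f s (x ∘ σ) = f s x)
    (hmono : ∀ (s : ℕ) (x y : Fin s → ℝ), (∀ j, x j ≤ y j) → f s x ≤ f s y)
    (p : Finset (Fin m) → ℝ)
    (hpdef : ∀ S : Finset (Fin m),
      p S = f S.card (fun j => T ((S.orderIsoOfFin rfl j : S) : Fin m)))
    (S : Finset (Fin m)) (hS : S.Nonempty)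
    (J : ℕ → Finset (Fin m))
    (hJ0 : J 0 = ∅)
    (hJprop : ∀ i, 1 ≤ i → i ≤ m - S.card →
      J i ⊆ Sᶜ ∧ (J i).card = i ∧ ∀ j ∈ J i, ∀ k ∈ Sᶜ \ J i, T k ≤ T j) :
    ((∀ K : Finset (Fin m), S ⊆ K → p K ≤ α) ↔
      ∀ i ≤ m - S.card, p (S ∪ J i) ≤ α) := by
  constructor
  · intro h i _
    exact h _ Finset.subset_union_left
  · intro h K hSK
    set i := K.card - S.card with hidef
    have hKm : K.card ≤ m := by simpa using K.card_le_univ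
    have hi : i ≤ m - S.card := Nat.sub_le_sub_right hKm _
    have hKα := h i hi
    rcases Nat.eq_zero_or_pos i with h0 | h1
    · have : K = S := by
        apply (Finset.eq_of_subset_of_card_le hSK ?_).symm
        omega
      rw [this]
      rw [h0, hJ0, Finset.union_empty] at hKα
      exact hKα
    · obtain ⟨hJsub, hJcard, hJmax⟩ := hJprop i h1 hi
      set D : Finset (Fin m) := K \ S with hDdef
      have hDcard : D.card = i := Finset.card_sdiff_of_subset hSK
      set D' : Finset (Fin m) := D \ J i with hD'def
      set Ji' : Finset (Fin m) := J i \ D with hJi'def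
      have hcard' : D'.card = Ji'.card :=
        Finset.card_sdiff_comm (by rw [hDcard, hJcard])
      have b : {x // x ∈ D'} ≃ {x // x ∈ Ji'} :=
        Fintype.equivOfCardEq (by simpa [Fintype.card_coe] using hcard')
      set π : Fin m → Fin m := fun x =>
        if h : x ∈ D' then ↑(b ⟨x, h⟩) else if h : x ∈ Ji' then ↑(b.symm ⟨x, h⟩) else x
        with hπdef
      have hdisj : ∀ x : Fin m, x ∈ D' → x ∈ Ji' → False := by
        intro x hx hy
        exact (Finset.mem_sdiff.1 hy).2 (Finset.mem_sdiff.1 hx).1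
      have hπD' : ∀ (x : Fin m) (h : x ∈ D'), π x = ↑(b ⟨x, h⟩) := by
        intro x h; simp [hπdef, h]
      have hπJi' : ∀ (x : Fin m) (h : x ∈ Ji'), π x = ↑(b.symm ⟨x, h⟩) := by
        intro x h
        have : x ∉ D' := fun h' => hdisj x h' h
        simp [hπdef, this, h]
      have hπid : ∀ x : Fin m, x ∉ D' → x ∉ Ji' → π x = x := by
        intro x h1 h2; simp [hπdef, h1, h2]
      have hinv : Function.Involutive π := by
        intro x
        by_cases hx : x ∈ D'
        · rw [hπD' x hx]
          have hb1 : ↑(b ⟨x, hx⟩) ∈ Ji' := (b ⟨x, hx⟩).2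
          rw [hπJi' _ hb1]
          have : (⟨↑(b ⟨x, hx⟩), hb1⟩ : {y // y ∈ Ji'}) = b ⟨x, hx⟩ := by
            apply Subtype.ext; rfl
          rw [this, Equiv.symm_apply_apply]
        · by_cases hy : x ∈ Ji'
          · rw [hπJi' x hy]
            have hb1 : ↑(b.symm ⟨x, hy⟩) ∈ D' := (b.symm ⟨x, hy⟩).2
            rw [hπD' _ hb1]
            have : (⟨↑(b.symm ⟨x, hy⟩), hb1⟩ : {y // y ∈ D'}) = b.symm ⟨x, hy⟩ := by
              apply Subtype.ext; rfl
            rw [this, Equiv.apply_symm_apply]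
          · rw [hπid x hx hy, hπid x hx hy]
      -- basic membership facts
      have hD'subD : D' ⊆ D := Finset.sdiff_subset
      have hJi'subJ : Ji' ⊆ J i := Finset.sdiff_subset
      have hDK : D ⊆ K := Finset.sdiff_subset
      have hKeq : ∀ x : Fin m, x ∈ K ↔ (x ∈ S ∨ x ∈ D) := by
        intro x
        constructor
        · intro hx
          by_cases hs : x ∈ S
          · exact Or.inl hs
          · exact Or.inr (Finset.mem_sdiff.2 ⟨hx, hs⟩)
        · rintro (hx | hx)
          · exact hSK hx
          · exact hDK hx
      have hJi'K : ∀ x : Fin m, x ∈ Ji' → x ∉ K := by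
        intro x hx hxK
        obtain ⟨hxJ, hxD⟩ := Finset.mem_sdiff.1 hx
        rcases (hKeq x).1 hxK with hs | hd
        · exact (Finset.mem_compl.1 (hJsub hxJ)) hs
        · exact hxD hd
      have hmemiff : ∀ x : Fin m, x ∈ K ↔ π x ∈ S ∪ J i := by
        intro x
        by_cases hx : x ∈ D'
        · rw [hπD' x hx]
          have hb1 : ↑(b ⟨x, hx⟩) ∈ Ji' := (b ⟨x, hx⟩).2
          constructor
          · intro _; exact Finset.mem_union_right _ (hJi'subJ hb1)
          · intro _; exact hDK (hD'subD hx)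
        · by_cases hy : x ∈ Ji'
          · rw [hπJi' x hy]
            have hb1 : ↑(b.symm ⟨x, hy⟩) ∈ D' := (b.symm ⟨x, hy⟩).2
            constructor
            · intro hxK; exact absurd hxK (hJi'K x hy)
            · intro hmem
              exfalso
              rcases Finset.mem_union.1 hmem with hs | hj
              · have : (↑(b.symm ⟨x, hy⟩) : Fin m) ∈ D := hD'subD hb1
                obtain ⟨hK', hS'⟩ := Finset.mem_sdiff.1 this
                exact hS' hs
              · exact (Finset.mem_sdiff.1 hb1).2 hj
          · rw [hπid x hx hy]
            constructor
            · intro hxK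
              rcases (hKeq x).1 hxK with hs | hd
              · exact Finset.mem_union_left _ hs
              · have : x ∈ J i := by
                  by_contra hxJ
                  exact hx (Finset.mem_sdiff.2 ⟨hd, hxJ⟩)
                exact Finset.mem_union_right _ this
            · intro hmem
              rcases Finset.mem_union.1 hmem with hs | hj
              · exact hSK hs
              · have : x ∈ D := by
                  by_contra hd
                  exact hy (Finset.mem_sdiff.2 ⟨hj, hd⟩)
                exact hDK this
      set πe : Equiv.Perm (Fin m) := hinv.toPerm π with hπe
      let e : {x // x ∈ K} ≃ {x // x ∈ S ∪ J i} := πe.subtypeEquiv hmemiff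
      have he : ∀ a : {x // x ∈ K}, T ↑a ≤ T ↑(e a) := by
        intro ⟨x, hxK⟩
        have hea : ((e ⟨x, hxK⟩ : {y // y ∈ S ∪ J i}) : Fin m) = π x := by
          simp [e, πe, Equiv.subtypeEquiv_apply, Function.Involutive.coe_toPerm]
          rfl
        rw [hea]
        by_cases hx : x ∈ D'
        · rw [hπD' x hx]
          have hb1 : ↑(b ⟨x, hx⟩) ∈ Ji' := (b ⟨x, hx⟩).2
          apply hJmax _ (hJi'subJ hb1)
          obtain ⟨hxD, hxJ⟩ := Finset.mem_sdiff.1 hx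
          obtain ⟨_, hxS⟩ := Finset.mem_sdiff.1 hxD
          exact Finset.mem_sdiff.2 ⟨Finset.mem_compl.2 hxS, hxJ⟩
        · have hy : x ∉ Ji' := fun h' => hJi'K x h' hxK
          rw [hπid x hx hy]
      have := pmono m T f hsym hmono p hpdef K (S ∪ J i) e he
      linarith
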